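/- Let (a_n)_{n≥0} be a sequence of nonnegative real numbers that is log-convex, i.e., a_i·a_{j+1} ≥ a_{i+1}·a_j for all 0 ≤ i < j. Then for all integers a > b ≥ 0 and all k ≥ 0: Σ_{j=0}^{k} binom(a+1+j, j)·a_j·binom(b+k−j, k−j)·a_{k−j} ≥ Σ_{j=0}^{k} binom(a+j, j)·a_j·binom(b+1+k−j, k−j)·a_{k−j}. -/
import Mathlib
open Finset


lemma cross_ineq' (a b : ℕ) (hba : b ≤ a) : ∀ m n : ℕ, m ≤ n →
    (a+1+m).choose m * (b+1+n).choose n ≤ (a+1+n).choose n * (b+1+m).choose m := by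
  intro m n
  induction n with
  | zero => intro h; interval_cases m; omega
  | succ n ih =>
    intro h
    rcases Nat.lt_or_ge m (n+1) with h' | h'
    · have IH := ih (by omega)
      have key1 : (b+1+(n+1)).choose (n+1) * (n+1) = (b+1+n+1) * (b+1+n).choose n := by
        rw [show b+1+(n+1) = (b+1+n)+1 from by omega]
        exact (Nat.add_one_mul_choose_eq (b+1+n) n).symm
      have key2 : (a+1+(n+1)).choose (n+1) * (n+1) = (a+1+n+1) * (a+1+n).choose n := by
        rw [show a+1+(n+1) = (a+1+n)+1 from by omega]
        exact (Nat.add_one_mul_choose_eq (a+1+n) n).symm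
      refine Nat.le_of_mul_le_mul_left ?_ (Nat.succ_pos n)
      calc (n+1) * ((a+1+m).choose m * (b+1+(n+1)).choose (n+1))
          = (a+1+m).choose m * ((b+1+(n+1)).choose (n+1) * (n+1)) := by ring
        _ = (b+1+n+1) * ((a+1+m).choose m * (b+1+n).choose n) := by rw [key1]; ring
        _ ≤ (b+1+n+1) * ((a+1+n).choose n * (b+1+m).choose m) := Nat.mul_le_mul_left _ IH
        _ ≤ (a+1+n+1) * ((a+1+n).choose n * (b+1+m).choose m) := Nat.mul_le_mul_right _ (by omega)
        _ = ((a+1+(n+1)).choose (n+1) * (n+1)) * (b+1+m).choose m := by rw [key2]; ring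
        _ = (n+1) * ((a+1+(n+1)).choose (n+1) * (b+1+m).choose m) := by ring
    · have : m = n + 1 := by omega
      subst this; omega


lemma partial_id' (a b k : ℕ) : ∀ m t : ℕ, k = m + 1 + t →
    (∑ j ∈ range (m+1), (a+1+j).choose j * (b+(k-j)).choose (k-j))
      + (a+1+m).choose m * (b+1+t).choose t
    = ∑ j ∈ range (m+1), (a+j).choose j * (b+1+(k-j)).choose (k-j) := by
  intro m
  induction m with
  | zero =>
    intro t hk
    simp only [zero_add, sum_range_one, Nat.sub_zero, Nat.choose_zero_right, one_mul, Nat.add_zero]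
    rw [show b+1+k = (b+k)+1 from by omega, show k = t+1 from by omega, Nat.choose_succ_succ,
        show b + (t+1) = b+1+t from by omega]
    simp only [Nat.succ_eq_add_one]
    omega
  | succ m ih =>
    intro t hk
    have IH := ih (t+1) (by omega)
    rw [sum_range_succ, sum_range_succ (fun j => (a+j).choose j * (b+1+(k-j)).choose (k-j)), ← IH]
    have e1 : k - (m+1) = t + 1 := by omega
    rw [e1]
    have p1 : (b+(t+1)).choose (t+1) + (b+1+t).choose t = (b+1+(t+1)).choose (t+1) := by
      rw [show b+1+(t+1) = (b+(t+1))+1 from by omega, Nat.choose_succ_succ,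
          show b + (t+1) = b+1+t from by omega]
      simp only [Nat.succ_eq_add_one]
      omega
    have p2 : (a+1+m).choose m + (a+(m+1)).choose (m+1) = (a+1+(m+1)).choose (m+1) := by
      rw [show a+1+(m+1) = (a+(m+1))+1 from by omega, Nat.choose_succ_succ,
          show a + (m+1) = a+1+m from by omega]
    nlinarith [p1, p2]

lemma full_id' (a b k : ℕ) :
    ∑ j ∈ range (k+1), (a+1+j).choose j * (b+(k-j)).choose (k-j)
    = ∑ j ∈ range (k+1), (a+j).choose j * (b+1+(k-j)).choose (k-j) := by
  cases k with
  | zero => simp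
  | succ m =>
    have H := partial_id' a b (m+1) m 0 (by omega)
    rw [sum_range_succ, sum_range_succ (fun j => (a+j).choose j * (b+1+(m+1-j)).choose (m+1-j)),
        ← H]
    simp only [Nat.sub_self, Nat.choose_zero_right, mul_one, Nat.add_zero]
    have p2 : (a+1+m).choose m + (a+(m+1)).choose (m+1) = (a+1+(m+1)).choose (m+1) := by
      rw [show a+1+(m+1) = (a+(m+1))+1 from by omega, Nat.choose_succ_succ,
          show a + (m+1) = a+1+m from by omega]
    omega

-- Abel summation
lemma abel_sum' (D p : ℕ → ℝ) : ∀ k : ℕ,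
    ∑ j ∈ range (k+1), D j * p j
    = (∑ j ∈ range (k+1), D j) * p k
      + ∑ m ∈ range k, (∑ j ∈ range (m+1), D j) * (p m - p (m+1)) := by
  intro k
  induction k with
  | zero => simp
  | succ k ih =>
    rw [sum_range_succ, ih, sum_range_succ (fun m => (∑ j ∈ range (m+1), D j) * (p m - p (m+1))),
        sum_range_succ D (k+1)]
    ring

lemma term_nonneg (x : ℕ → ℝ)
    (hlc : ∀ i j : ℕ, i < j → x (i + 1) * x j ≤ x i * x (j + 1))
    (a b : ℕ) (hba : b ≤ a) (m n : ℕ) :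
    0 ≤ (((a+1+m).choose m * (b+1+n).choose n : ℕ) : ℝ) * (x (m+1) * x n - x m * x (n+1))
      + (((a+1+n).choose n * (b+1+m).choose m : ℕ) : ℝ) * (x (n+1) * x m - x n * x (m+1)) := by
  rcases le_total m n with h | h
  · have hS : (((a+1+m).choose m * (b+1+n).choose n : ℕ) : ℝ)
        ≤ (((a+1+n).choose n * (b+1+m).choose m : ℕ) : ℝ) := by
      exact_mod_cast cross_ineq' a b hba m n h
    have hp : x (m+1) * x n ≤ x m * x (n+1) := by
      rcases eq_or_lt_of_le h with rfl | h'
      · rw [mul_comm]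
      · exact hlc m n h'
    nlinarith [mul_nonneg (sub_nonneg.2 hS) (sub_nonneg.2 hp)]
  · have hS : (((a+1+n).choose n * (b+1+m).choose m : ℕ) : ℝ)
        ≤ (((a+1+m).choose m * (b+1+n).choose n : ℕ) : ℝ) := by
      exact_mod_cast cross_ineq' a b hba n m h
    have hp : x (n+1) * x m ≤ x n * x (m+1) := by
      rcases eq_or_lt_of_le h with rfl | h'
      · rw [mul_comm]
      · exact hlc n m h'
    nlinarith [mul_nonneg (sub_nonneg.2 hS) (sub_nonneg.2 hp)]

theorem stmt_9 (x : ℕ → ℝ) (hx : ∀ n, 0 ≤ x n)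
    (hlc : ∀ i j : ℕ, i < j → x (i + 1) * x j ≤ x i * x (j + 1))
    (a b k : ℕ) (hab : b < a) :
    ∑ j ∈ Finset.range (k + 1),
        ((a + j).choose j : ℝ) * x j * ((b + 1 + (k - j)).choose (k - j) : ℝ) * x (k - j) ≤
      ∑ j ∈ Finset.range (k + 1),
        ((a + 1 + j).choose j : ℝ) * x j * ((b + (k - j)).choose (k - j) : ℝ) * x (k - j) := by
  have hba : b ≤ a := le_of_lt hab
  set D : ℕ → ℝ := fun j =>
    (((a+1+j).choose j * (b+(k-j)).choose (k-j) : ℕ) : ℝ)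
      - (((a+j).choose j * (b+1+(k-j)).choose (k-j) : ℕ) : ℝ) with hD
  set p : ℕ → ℝ := fun j => x j * x (k - j) with hp
  have main : 0 ≤ ∑ j ∈ range (k+1), D j * p j := by
    rw [abel_sum']
    have hT0 : (∑ j ∈ range (k+1), D j) = 0 := by
      simp only [hD]
      rw [sum_sub_distrib, sub_eq_zero]
      exact_mod_cast full_id' a b k
    rw [hT0, zero_mul, zero_add]
    have hTm : ∀ m ∈ range k, (∑ j ∈ range (m+1), D j) * (p m - p (m+1))
        = (((a+1+m).choose m * (b+1+(k-1-m)).choose (k-1-m) : ℕ) : ℝ) * (p (m+1) - p m) := by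
      intro m hm
      rw [mem_range] at hm
      have hpart := partial_id' a b k m (k-1-m) (by omega)
      have hsum : (∑ j ∈ range (m+1), D j)
          = -(((a+1+m).choose m * (b+1+(k-1-m)).choose (k-1-m) : ℕ) : ℝ) := by
        simp only [hD]
        rw [sum_sub_distrib]
        have hc := congrArg (Nat.cast : ℕ → ℝ) hpart
        push_cast at hc ⊢
        linarith
      rw [hsum]; ring
    rw [sum_congr rfl hTm]
    set Q := ∑ m ∈ range k,
      (((a+1+m).choose m * (b+1+(k-1-m)).choose (k-1-m) : ℕ) : ℝ) * (p (m+1) - p m) with hQ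
    have h2 : 0 ≤ Q + Q := by
      rw [hQ]
      nth_rewrite 2 [← Finset.sum_range_reflect]
      rw [← sum_add_distrib]
      apply sum_nonneg
      intro m hm
      rw [mem_range] at hm
      obtain ⟨n, rfl⟩ : ∃ n, k = m + 1 + n := ⟨k - (m+1), by omega⟩
      simp only [hp, show m+1+n-1-m = n from by omega, show m+1+n-(m+1) = n from by omega,
        show m+1+n-m = n+1 from by omega, show m+1+n-1-n = m from by omega,
        show m+1+n-n = m+1 from by omega, show m+1+n-(n+1) = m from by omega]
      exact term_nonneg x hlc a b hba m n
    linarith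
  rw [← sub_nonneg, ← sum_sub_distrib]
  refine le_trans main (le_of_eq (sum_congr rfl fun j hj => ?_))
  simp only [hD, hp]
  push_cast
  ring
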